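/- Let H be a Hilbert space with norms ‖·‖ and ||| · ||| satisfying ‖v‖² ≤ C|||v|||². Let u ∈ H, X ⊂ H a subspace, U ∈ X with Galerkin orthogonality b(u − U, V) = 0 for all V ∈ X, where b(w,v) = a(w,v) + ⟨Kw,v⟩, a is a continuous hermitian form inducing ||| · |||, and K : H → H* is linear. Suppose δ := ‖K e‖_{H*} with e := (u − U)/‖u − U‖ (and e := 0 if u = U) satisfies Cδ < 1. Then |||u − U||| ≤ ((1 + Cδ)/(1 − Cδ)) · min_{V∈X} |||u − V|||. -/

import Mathlib

open RCLike Filter Topology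

/-- Quantitative Céa lemma: the quasi-optimality constant tends to 1. -/
theorem stmt13 {𝕜 : Type*} [RCLike 𝕜] {H : Type*} [NormedAddCommGroup H]
    [InnerProductSpace 𝕜 H]
    (a : H → H → 𝕜) (C : ℝ) (hC : 0 < C)
    (hherm : ∀ w v, a w v = starRingEnd 𝕜 (a v w))
    (hlin : ∀ w, IsLinearMap 𝕜 (a w))
    (hnorm : ∀ v : H, ‖v‖ ^ 2 ≤ C * re (a v v))
    (K : H →L[𝕜] (H →L[𝕜] 𝕜))
    (b : H → H → 𝕜) (hb : ∀ w v, b w v = a w v + K w v)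
    (X : Submodule 𝕜 H) (u U : H) (hU : U ∈ X)
    (hGalerkin : ∀ V ∈ X, b (u - U) V = 0)
    (e : H) (he0 : u = U → e = 0)
    (he1 : u ≠ U → e = ((‖u - U‖⁻¹ : ℝ) : 𝕜) • (u - U))
    (δ : ℝ) (hδ : δ = ‖K e‖) (hCδ : C * δ < 1) :
    Real.sqrt (re (a (u - U) (u - U)))
      ≤ (1 + C * δ) / (1 - C * δ)
        * ⨅ V : X, Real.sqrt (re (a (u - (V : H)) (u - (V : H)))) := by
  set q : H → H → ℝ := fun x y => re (a x y) with hq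
  -- basic algebraic facts about a
  have haddr : ∀ x y z : H, a x (y + z) = a x y + a x z := fun x y z => (hlin x).map_add y z
  have hsubr : ∀ x y z : H, a x (y - z) = a x y - a x z := fun x y z => (hlin x).map_sub y z
  have hsmulr : ∀ (x y : H) (c : 𝕜), a x (c • y) = c * a x y := fun x y c => by
    rw [(hlin x).map_smul]; rfl
  have haddl : ∀ x y z : H, a (x + y) z = a x z + a y z := fun x y z => by
    rw [hherm, haddr, map_add, ← hherm, ← hherm]
  have hsmull : ∀ (x y : H) (c : 𝕜), a (c • x) y = starRingEnd 𝕜 c * a x y := fun x y c => by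
    rw [hherm, hsmulr, map_mul, ← hherm]
  have hremul : ∀ (r : ℝ) (z : 𝕜), re ((r : 𝕜) * z) = r * re z := fun r z => by
    rw [← smul_eq_mul, ← RCLike.real_smul_eq_coe_smul (K := 𝕜), smul_re]
  have hq_nonneg : ∀ x : H, 0 ≤ q x x := by
    intro x
    have h1 := hnorm x
    have h2 := sq_nonneg ‖x‖
    nlinarith
  have hqsymm : ∀ x y : H, q x y = q y x := fun x y => by
    simp only [hq]; rw [hherm]; exact conj_re _
  -- expansion of q on combinations
  have hexpand : ∀ (x y : H) (t : ℝ),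
      q (x + (t : 𝕜) • y) (x + (t : 𝕜) • y) = q x x + 2 * t * q x y + t ^ 2 * q y y := by
    intro x y t
    have h1 : a (x + (t : 𝕜) • y) (x + (t : 𝕜) • y)
        = a x x + (t : 𝕜) * a x y + ((t : 𝕜) * a y x + (t : 𝕜) * ((t : 𝕜) * a y y)) := by
      simp only [haddl, haddr, hsmull, hsmulr, conj_ofReal]
    have h2 : re (a y x) = re (a x y) := hqsymm y x
    simp only [hq, h1, map_add, hremul]
    rw [h2]
    ring
  -- Cauchy-Schwarz for q
  have hCS : ∀ x y : H, (q x y) ^ 2 ≤ q x x * q y y := by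
    intro x y
    have key : ∀ t : ℝ, 0 ≤ q y y * (t * t) + (2 * q x y) * t + q x x := by
      intro t
      have := hq_nonneg (x + (t : 𝕜) • y)
      rw [hexpand x y t] at this
      nlinarith
    have hd := discrim_le_zero key
    rw [discrim] at hd
    nlinarith
  have hCS' : ∀ x y : H, q x y ≤ Real.sqrt (q x x) * Real.sqrt (q y y) := by
    intro x y
    calc q x y ≤ |q x y| := le_abs_self _
      _ = Real.sqrt ((q x y) ^ 2) := (Real.sqrt_sq_eq_abs _).symm
      _ ≤ Real.sqrt (q x x * q y y) := Real.sqrt_le_sqrt (hCS x y)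
      _ = Real.sqrt (q x x) * Real.sqrt (q y y) := Real.sqrt_mul (hq_nonneg x) _
  -- norm bound via sqrt
  have hnorm' : ∀ v : H, ‖v‖ ≤ Real.sqrt C * Real.sqrt (q v v) := by
    intro v
    have : ‖v‖ = Real.sqrt (‖v‖ ^ 2) := (Real.sqrt_sq (norm_nonneg v)).symm
    rw [this, ← Real.sqrt_mul hC.le]
    exact Real.sqrt_le_sqrt (hnorm v)
  set c : ℝ := (1 + C * δ) / (1 - C * δ) with hc
  have hδ0 : 0 ≤ δ := hδ ▸ norm_nonneg _
  have hCδ0 : 0 ≤ C * δ := mul_nonneg hC.le hδ0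
  have hden : 0 < 1 - C * δ := by linarith
  have hcpos : 0 < c := div_pos (by linarith) hden
  have hinf_nonneg : 0 ≤ ⨅ V : X, Real.sqrt (q (u - (V : H)) (u - (V : H))) :=
    Real.iInf_nonneg fun V => Real.sqrt_nonneg _
  by_cases huU : u = U
  · -- trivial case
    have : a (u - U) (u - U) = 0 := by
      rw [huU, sub_self]
      have := (hlin 0).map_zero
      exact this
    rw [show re (a (u - U) (u - U)) = (0 : ℝ) by rw [this]; simp, Real.sqrt_zero]
    exact mul_nonneg hcpos.le hinf_nonneg
  · set w : H := u - U with hw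
    have hwne : w ≠ 0 := sub_ne_zero_of_ne huU
    set t : ℝ := Real.sqrt (q w w) with ht
    -- ‖K w‖ = ‖w‖ * δ
    have hKw : ‖K w‖ = ‖w‖ * δ := by
      have hee := he1 huU
      have : K e = ((‖w‖⁻¹ : ℝ) : 𝕜) • K w := by rw [hee, map_smul]
      rw [hδ, this, norm_smul ((‖w‖⁻¹ : ℝ) : 𝕜) (K w)]
      have hwpos : 0 < ‖w‖ := norm_pos_iff.mpr hwne
      rw [RCLike.norm_ofReal, abs_of_nonneg (inv_nonneg.mpr hwpos.le)]
      field_simp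
    -- key inequality for each V
    have hkey : ∀ V : X, t ≤ c * Real.sqrt (q (u - (V : H)) (u - (V : H))) := by
      intro V
      set p : H := u - (V : H) with hp
      set s : ℝ := Real.sqrt (q p p) with hs
      set W : H := U - (V : H) with hW
      have hWX : W ∈ X := X.sub_mem hU V.2
      have hGal : a w W = -(K w W) := by
        have h0 := hGalerkin W hWX
        rw [hb] at h0
        linear_combination h0
      have hwpW : w = p - W := by rw [hp, hW, hw]; abel
      -- q w w = q w p + re (K w W)
      have hsplit : q w w = q w p + re (K w W) := by
        have : a w w = a w p - a w W := by
          have h0 := hsubr w p W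
          rw [← hwpW] at h0
          exact h0
        simp only [hq, this, hGal, map_sub, map_neg]
        ring
      -- triangle: sqrt (q W W) ≤ t + s
      have hWexp : q W W = q p p - 2 * q w p + q w w := by
        have hWpw : W = p + ((-1 : ℝ) : 𝕜) • w := by
          push_cast; rw [neg_one_smul]; rw [hwpW]; abel
        rw [hWpw, hexpand p w (-1), hqsymm p w]
        ring
      have hWs : Real.sqrt (q W W) ≤ t + s := by
        have h1 : q W W ≤ (t + s) ^ 2 := by
          have h2 : -(q w p) ≤ t * s := by
            have habs : |q w p| ≤ t * s := by
              calc |q w p| = Real.sqrt ((q w p) ^ 2) := (Real.sqrt_sq_eq_abs _).symm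
                _ ≤ Real.sqrt (q w w * q p p) := Real.sqrt_le_sqrt (hCS w p)
                _ = t * s := Real.sqrt_mul (hq_nonneg w) _
            exact le_trans (neg_le_abs _) habs
          have ht2 : q w w = t ^ 2 := (Real.sq_sqrt (hq_nonneg w)).symm
          have hs2 : q p p = s ^ 2 := (Real.sq_sqrt (hq_nonneg p)).symm
          rw [hWexp, ht2, hs2]; nlinarith
        calc Real.sqrt (q W W) ≤ Real.sqrt ((t + s) ^ 2) := Real.sqrt_le_sqrt h1
          _ = t + s := by
              rw [Real.sqrt_sq (by positivity : (0:ℝ) ≤ t + s)]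
      -- bound re (K w W)
      have hKbound : re (K w W) ≤ C * δ * t * (t + s) := by
        calc re (K w W) ≤ ‖K w W‖ := re_le_norm _
          _ ≤ ‖K w‖ * ‖W‖ := (K w).le_opNorm W
          _ = ‖w‖ * δ * ‖W‖ := by rw [hKw]
          _ ≤ (Real.sqrt C * t) * δ * (Real.sqrt C * Real.sqrt (q W W)) := by
              apply mul_le_mul
              · exact mul_le_mul_of_nonneg_right (hnorm' w) hδ0
              · exact hnorm' W
              · exact norm_nonneg _
              · positivity
          _ = C * δ * t * Real.sqrt (q W W) := by
              rw [show (Real.sqrt C * t) * δ * (Real.sqrt C * Real.sqrt (q W W))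
                  = (Real.sqrt C * Real.sqrt C) * δ * t * Real.sqrt (q W W) by ring,
                Real.mul_self_sqrt hC.le]
          _ ≤ C * δ * t * (t + s) := by
              apply mul_le_mul_of_nonneg_left hWs
              positivity
      -- combine
      have hqwp : q w p ≤ t * s := hCS' w p
      have hmain : t ^ 2 ≤ t * s + C * δ * t * (t + s) := by
        have ht2 : t ^ 2 = q w w := Real.sq_sqrt (hq_nonneg w)
        rw [ht2, hsplit]; linarith
      -- conclude t ≤ c * s
      rcases eq_or_lt_of_le (Real.sqrt_nonneg (q w w)) with htz | htpos
      · have ht0 : t = 0 := by rw [ht, ← htz]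
        rw [ht0]
        positivity
      · rw [← ht] at htpos
        rw [hc, div_mul_eq_mul_div, le_div_iff₀ hden]
        nlinarith
    -- pass to infimum
    have hne : Nonempty X := ⟨⟨U, hU⟩⟩
    have h1 : t / c ≤ ⨅ V : X, Real.sqrt (q (u - (V : H)) (u - (V : H))) := by
      apply le_ciInf
      intro V
      rw [div_le_iff₀ hcpos, mul_comm]
      exact hkey V
    calc t = c * (t / c) := by field_simp
      _ ≤ c * ⨅ V : X, Real.sqrt (q (u - (V : H)) (u - (V : H))) :=
          mul_le_mul_of_nonneg_left h1 hcpos.le
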